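/- arXiv:2411.12601 — 4 statements merged into one kernel-verified Lean document; each statement's English description precedes it below -/
import Mathlib

section
/- Let u be a minimizer of F_H^{con} and let x_i∈D(u)∖L. Then there exist two hyperedges e_k,e_l∈E, both containing x_i, such that u(x_i)=max_{x_j∈e_k}u(x_j) and u(x_i)=min_{x_j∈e_l}u(x_j). -/
open Finset

/-- A finite hypergraph on vertex set `V` with `m` hyperedges:
each hyperedge is a nonempty finite set of vertices and carries a positive weight. -/
structure WHypergraph (V : Type*) [Fintype V] (m : ℕ) where
  e : Fin m → Finset V
  w : Fin m → ℝ
  e_nonempty : ∀ k, (e k).Nonempty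
  w_pos : ∀ k, 0 < w k

variable {V : Type*} [Fintype V] {m : ℕ}

/-- Maximal oscillation of `u` on the hyperedge `e k`:
`max_{x_i, x_j ∈ e_k} |u x_i - u x_j|`. -/
noncomputable def osc (H : WHypergraph V m) (u : V → ℝ) (k : Fin m) : ℝ :=
  (H.e k ×ˢ H.e k).sup' ((H.e_nonempty k).product (H.e_nonempty k))
    (fun q => |u q.1 - u q.2|)

/-- The hypergraph p-Laplacian regularizer
`F_H(u) = ∑ k w_k (max_{x_i,x_j ∈ e_k} |u x_i - u x_j|)^p`. -/
noncomputable def FH (H : WHypergraph V m) (p : ℝ) (u : V → ℝ) : ℝ :=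
  ∑ k : Fin m, H.w k * (osc H u k) ^ p

/-- `u` is admissible for the labeled set `L` with labels `y`. -/
def Admissible (L : Finset V) (y u : V → ℝ) : Prop := ∀ x ∈ L, u x = y x

/-- `u` is a minimizer of the constrained functional `F_H^{con}`. -/
def IsMinimizer (H : WHypergraph V m) (p : ℝ) (L : Finset V) (y u : V → ℝ) : Prop :=
  Admissible L y u ∧ ∀ v : V → ℝ, Admissible L y v → FH H p u ≤ FH H p v

/-- Connectivity of a hypergraph: any two vertices are linked by a chain of hyperedges
with consecutive nonempty intersections. -/
def WHypergraph.Connected [DecidableEq V] (H : WHypergraph V m) : Prop :=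
  ∀ x y : V, ∃ l : ℕ, ∃ ks : Fin (l + 1) → Fin m,
    x ∈ H.e (ks 0) ∧ y ∈ H.e (ks (Fin.last l)) ∧
    ∀ i : Fin l, (H.e (ks i.castSucc) ∩ H.e (ks i.succ)).Nonempty

/-- The set `D(u)` of vertices whose values are rigid: labeled vertices together with the
unlabeled vertices at which every sufficiently small perturbation strictly increases `F_H`. -/
def Dset [DecidableEq V] (H : WHypergraph V m) (p : ℝ) (L : Finset V) (u : V → ℝ) : Set V :=
  {x | x ∈ L ∨ (x ∉ L ∧ ∃ δ > (0 : ℝ), ∀ ε : ℝ, 0 < |ε| → |ε| < δ →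
    FH H p u < FH H p (Function.update u x (u x + ε)))}

/-- φ_p(s) = |s|^{p-2} s for s ≠ 0 and φ_p(0) = 0. -/
noncomputable def phiP (p s : ℝ) : ℝ := if s = 0 then 0 else |s| ^ (p - 2) * s

/-- The simplified hypergraph p-Laplacian operator. -/
noncomputable def LpH [DecidableEq V] (H : WHypergraph V m) (p : ℝ) (u : V → ℝ) (x : V) : ℝ :=
  ∑ k ∈ Finset.univ.filter (fun k => x ∈ H.e k),
    H.w k * phiP p ((H.e k).sup' (H.e_nonempty k) u + (H.e k).inf' (H.e_nonempty k) u - 2 * u x)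

/-- The indicator vector `𝟙_x ∈ ℝ^V`. -/
def ind [DecidableEq V] (x : V) : V → ℝ := fun z => if z = x then 1 else 0

/-- Euclidean inner product on `ℝ^V`. -/
noncomputable def ip (b u : V → ℝ) : ℝ := ∑ x : V, b x * u x

/-- `B_e = conv {𝟙_{x_i} - 𝟙_{x_j} : x_i, x_j ∈ e}`. -/
def Bset [DecidableEq V] (e : Finset V) : Set (V → ℝ) :=
  convexHull ℝ {b | ∃ xi ∈ e, ∃ xj ∈ e, b = ind xi - ind xj}
lemma abs_sub_le_osc (H : WHypergraph V m) (u : V → ℝ) (k : Fin m) {a b : V}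
    (ha : a ∈ H.e k) (hb : b ∈ H.e k) : |u a - u b| ≤ osc H u k := by
  unfold osc
  have hmem : ((a, b) : V × V) ∈ H.e k ×ˢ H.e k := mem_product.2 ⟨ha, hb⟩
  exact Finset.le_sup' (fun q : V × V => |u q.1 - u q.2|) hmem

lemma osc_nonneg (H : WHypergraph V m) (u : V → ℝ) (k : Fin m) : 0 ≤ osc H u k := by
  obtain ⟨a, ha⟩ := H.e_nonempty k
  simpa using abs_sub_le_osc H u k ha ha

lemma sup_sub_inf_le_osc (H : WHypergraph V m) (u : V → ℝ) (k : Fin m) :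
    (H.e k).sup' (H.e_nonempty k) u - (H.e k).inf' (H.e_nonempty k) u ≤ osc H u k := by
  obtain ⟨a, ha, hsa⟩ := Finset.exists_mem_eq_sup' (H.e_nonempty k) u
  obtain ⟨b, hb, hib⟩ := Finset.exists_mem_eq_inf' (H.e_nonempty k) u
  rw [hsa, hib]
  calc u a - u b ≤ |u a - u b| := le_abs_self _
    _ ≤ osc H u k := abs_sub_le_osc H u k ha hb

lemma osc_update_le [DecidableEq V] (H : WHypergraph V m) (u : V → ℝ) (k : Fin m) (xi : V)
    (c : ℝ) (hc1 : (H.e k).inf' (H.e_nonempty k) u ≤ c)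
    (hc2 : c ≤ (H.e k).sup' (H.e_nonempty k) u) :
    osc H (Function.update u xi c) k ≤ osc H u k := by
  unfold osc
  apply Finset.sup'_le
  rintro ⟨a, b⟩ hab
  rw [mem_product] at hab
  set v := Function.update u xi c with hv
  have key : ∀ z ∈ H.e k, (H.e k).inf' (H.e_nonempty k) u ≤ v z ∧
      v z ≤ (H.e k).sup' (H.e_nonempty k) u := by
    intro z hz
    by_cases h : z = xi
    · subst h; simp [hv, hc1, hc2]
    · simp only [hv, Function.update_of_ne h]
      exact ⟨Finset.inf'_le u hz, Finset.le_sup' u hz⟩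
  obtain ⟨h1, h2⟩ := key a hab.1
  obtain ⟨h3, h4⟩ := key b hab.2
  have : |v a - v b| ≤ (H.e k).sup' (H.e_nonempty k) u - (H.e k).inf' (H.e_nonempty k) u := by
    rw [abs_sub_le_iff]; constructor <;> linarith
  exact this.trans (sup_sub_inf_le_osc H u k)

lemma osc_update_eq [DecidableEq V] (H : WHypergraph V m) (u : V → ℝ) (k : Fin m) (xi : V)
    (c : ℝ) (hxi : xi ∉ H.e k) : osc H (Function.update u xi c) k = osc H u k := by
  unfold osc
  apply Finset.sup'_congr _ rfl
  rintro ⟨a, b⟩ hab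
  rw [mem_product] at hab
  have ha : a ≠ xi := fun h => hxi (h ▸ hab.1)
  have hb : b ≠ xi := fun h => hxi (h ▸ hab.2)
  simp [Function.update_of_ne ha, Function.update_of_ne hb]

lemma FH_update_le [DecidableEq V] (H : WHypergraph V m) (p : ℝ) (hp : 0 ≤ p) (u : V → ℝ)
    (xi : V) (c : ℝ)
    (h : ∀ k, xi ∈ H.e k → (H.e k).inf' (H.e_nonempty k) u ≤ c ∧
      c ≤ (H.e k).sup' (H.e_nonempty k) u) :
    FH H p (Function.update u xi c) ≤ FH H p u := by
  unfold FH
  apply Finset.sum_le_sum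
  intro k _
  apply mul_le_mul_of_nonneg_left _ (H.w_pos k).le
  by_cases hk : xi ∈ H.e k
  · exact Real.rpow_le_rpow (osc_nonneg _ _ _)
      (osc_update_le H u k xi c (h k hk).1 (h k hk).2) hp
  · rw [osc_update_eq H u k xi c hk]


/-- at a vertex of `D(u) \ L`, the minimizer attains the maximum on some
hyperedge containing it and the minimum on some (other) hyperedge containing it. -/
theorem mem_Dset_attains_max_min [DecidableEq V] (H : WHypergraph V m) (p : ℝ) (hp : 1 < p)
    (L : Finset V) (hL : L.Nonempty) (y u : V → ℝ) (hu : IsMinimizer H p L y u)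
    (xi : V) (hxi : xi ∈ Dset H p L u) (hxiL : xi ∉ L) :
    ∃ k l : Fin m, xi ∈ H.e k ∧ xi ∈ H.e l ∧
      u xi = (H.e k).sup' (H.e_nonempty k) u ∧
      u xi = (H.e l).inf' (H.e_nonempty l) u := by
  rcases hxi with hxi | ⟨-, δ, hδ, hstr⟩
  · exact absurd hxi hxiL
  have hp0 : (0 : ℝ) ≤ p := by linarith
  set K : Finset (Fin m) := Finset.univ.filter (fun k => xi ∈ H.e k) with hK
  have claimA : ∃ k, xi ∈ H.e k ∧ u xi = (H.e k).sup' (H.e_nonempty k) u := by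
    by_contra h
    push_neg at h
    have hlt : ∀ k, xi ∈ H.e k → u xi < (H.e k).sup' (H.e_nonempty k) u :=
      fun k hk => lt_of_le_of_ne (Finset.le_sup' u hk) (h k hk)
    set S : Finset ℝ :=
      insert (δ/2) (K.image fun k => ((H.e k).sup' (H.e_nonempty k) u - u xi)/2) with hS
    set ε := S.min' (Finset.insert_nonempty _ _) with hε
    have hεpos : 0 < ε := by
      rw [hε, Finset.lt_min'_iff]
      intro c hc
      rcases Finset.mem_insert.1 hc with rfl | hc
      · linarith
      · obtain ⟨k, hk, rfl⟩ := Finset.mem_image.1 hc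
        have hk' : xi ∈ H.e k := (Finset.mem_filter.1 hk).2
        have := hlt k hk'
        linarith
    have hεδ : ε < δ := by
      have := Finset.min'_le S (δ/2) (Finset.mem_insert_self _ _)
      rw [← hε] at this; linarith
    have hbound : ∀ k, xi ∈ H.e k → (H.e k).inf' (H.e_nonempty k) u ≤ u xi + ε ∧
        u xi + ε ≤ (H.e k).sup' (H.e_nonempty k) u := by
      intro k hk
      have hmem : ((H.e k).sup' (H.e_nonempty k) u - u xi)/2 ∈ S :=
        Finset.mem_insert_of_mem (Finset.mem_image_of_mem _
          (Finset.mem_filter.2 ⟨Finset.mem_univ k, hk⟩))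
      have h1 := Finset.min'_le S _ hmem
      rw [← hε] at h1
      have h2 := hlt k hk
      have h3 : (H.e k).inf' (H.e_nonempty k) u ≤ u xi := Finset.inf'_le u hk
      constructor <;> linarith
    have hle := FH_update_le H p hp0 u xi (u xi + ε) hbound
    have := hstr ε (by rwa [abs_of_pos hεpos]) (by rwa [abs_of_pos hεpos])
    linarith
  have claimB : ∃ l, xi ∈ H.e l ∧ u xi = (H.e l).inf' (H.e_nonempty l) u := by
    by_contra h
    push_neg at h
    have hlt : ∀ k, xi ∈ H.e k → (H.e k).inf' (H.e_nonempty k) u < u xi :=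
      fun k hk => lt_of_le_of_ne (Finset.inf'_le u hk) (fun he => h k hk he.symm)
    set S : Finset ℝ :=
      insert (δ/2) (K.image fun k => (u xi - (H.e k).inf' (H.e_nonempty k) u)/2) with hS
    set ε := S.min' (Finset.insert_nonempty _ _) with hε
    have hεpos : 0 < ε := by
      rw [hε, Finset.lt_min'_iff]
      intro c hc
      rcases Finset.mem_insert.1 hc with rfl | hc
      · linarith
      · obtain ⟨k, hk, rfl⟩ := Finset.mem_image.1 hc
        have hk' : xi ∈ H.e k := (Finset.mem_filter.1 hk).2
        have := hlt k hk'
        linarith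
    have hεδ : ε < δ := by
      have := Finset.min'_le S (δ/2) (Finset.mem_insert_self _ _)
      rw [← hε] at this; linarith
    have hbound : ∀ k, xi ∈ H.e k → (H.e k).inf' (H.e_nonempty k) u ≤ u xi + (-ε) ∧
        u xi + (-ε) ≤ (H.e k).sup' (H.e_nonempty k) u := by
      intro k hk
      have hmem : (u xi - (H.e k).inf' (H.e_nonempty k) u)/2 ∈ S :=
        Finset.mem_insert_of_mem (Finset.mem_image_of_mem _
          (Finset.mem_filter.2 ⟨Finset.mem_univ k, hk⟩))
      have h1 := Finset.min'_le S _ hmem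
      rw [← hε] at h1
      have h2 := hlt k hk
      have h3 : u xi ≤ (H.e k).sup' (H.e_nonempty k) u := Finset.le_sup' u hk
      constructor <;> linarith
    have hle := FH_update_le H p hp0 u xi (u xi + (-ε)) hbound
    have habs : |(-ε)| = ε := by rw [abs_neg, abs_of_pos hεpos]
    have := hstr (-ε) (by rwa [habs]) (by rwa [habs])
    linarith
  obtain ⟨k, hk, hks⟩ := claimA
  obtain ⟨l, hl, hli⟩ := claimB
  exact ⟨k, l, hk, hl, hks, hli⟩
end

section
/- Let u_1 and u_2 be two minimizers of F_H^{con}. Then for every hyperedge e_k∈E, the maximal oscillations agree: max_{x_i,x_j∈e_k}|u_1(x_i)−u_1(x_j)| = max_{x_i,x_j∈e_k}|u_2(x_i)−u_2(x_j)|. -/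
open Finset

variable {V : Type*} [Fintype V] {m : ℕ}

/-- any two minimizers of `F_H^{con}` have the same maximal oscillation on
every hyperedge. -/
theorem minimizers_osc_eq (H : WHypergraph V m) (p : ℝ) (hp : 1 < p)
    (L : Finset V) (hL : L.Nonempty) (y u₁ u₂ : V → ℝ)
    (hu₁ : IsMinimizer H p L y u₁) (hu₂ : IsMinimizer H p L y u₂) :
    ∀ k : Fin m, osc H u₁ k = osc H u₂ k := by
  by_contra h
  push_neg at h
  obtain ⟨k₀, hk₀⟩ := h
  set v : V → ℝ := fun x => (u₁ x + u₂ x) / 2 with hv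
  have hadm : Admissible L y v := fun x hx => by
    simp only [hv, hu₁.1 x hx, hu₂.1 x hx]; ring
  have hM : FH H p u₁ = FH H p u₂ :=
    le_antisymm (hu₁.2 u₂ hu₂.1) (hu₂.2 u₁ hu₁.1)
  have hosc_nonneg : ∀ (u : V → ℝ) (k : Fin m), 0 ≤ osc H u k := by
    intro u k
    obtain ⟨x, hx⟩ := H.e_nonempty k
    have := Finset.le_sup' (fun q : V × V => |u q.1 - u q.2|)
      (Finset.mem_product.2 ⟨hx, hx⟩ : (x, x) ∈ H.e k ×ˢ H.e k)
    have h0 : |u x - u x| = (0:ℝ) := by simp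
    unfold osc
    linarith
  have hoscv : ∀ k, osc H v k ≤ (osc H u₁ k + osc H u₂ k) / 2 := by
    intro k
    apply Finset.sup'_le
    intro q hq
    have h1 : |u₁ q.1 - u₁ q.2| ≤ osc H u₁ k :=
      Finset.le_sup' (fun q : V × V => |u₁ q.1 - u₁ q.2|) hq
    have h2 : |u₂ q.1 - u₂ q.2| ≤ osc H u₂ k :=
      Finset.le_sup' (fun q : V × V => |u₂ q.1 - u₂ q.2|) hq
    have : |v q.1 - v q.2| = |(u₁ q.1 - u₁ q.2) + (u₂ q.1 - u₂ q.2)| / 2 := by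
      rw [hv]
      rw [show (u₁ q.1 + u₂ q.1) / 2 - (u₁ q.2 + u₂ q.2) / 2
        = ((u₁ q.1 - u₁ q.2) + (u₂ q.1 - u₂ q.2)) / 2 by ring]
      rw [abs_div]
      norm_num
    rw [this]
    have := abs_add_le (u₁ q.1 - u₁ q.2) (u₂ q.1 - u₂ q.2)
    linarith
  -- convexity bounds
  have hconv : ∀ k, ((osc H u₁ k + osc H u₂ k) / 2) ^ p
      ≤ (osc H u₁ k ^ p + osc H u₂ k ^ p) / 2 := by
    intro k
    have := (strictConvexOn_rpow hp).convexOn.2 (Set.mem_Ici.2 (hosc_nonneg u₁ k))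
      (Set.mem_Ici.2 (hosc_nonneg u₂ k)) (by norm_num : (0:ℝ) ≤ 1/2)
      (by norm_num : (0:ℝ) ≤ 1/2) (by norm_num)
    simp only [smul_eq_mul] at this
    calc ((osc H u₁ k + osc H u₂ k) / 2) ^ p
        = (1/2 * osc H u₁ k + 1/2 * osc H u₂ k) ^ p := by ring_nf
      _ ≤ 1/2 * osc H u₁ k ^ p + 1/2 * osc H u₂ k ^ p := this
      _ = (osc H u₁ k ^ p + osc H u₂ k ^ p) / 2 := by ring
  have hstrict : ((osc H u₁ k₀ + osc H u₂ k₀) / 2) ^ p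
      < (osc H u₁ k₀ ^ p + osc H u₂ k₀ ^ p) / 2 := by
    have := (strictConvexOn_rpow hp).2 (Set.mem_Ici.2 (hosc_nonneg u₁ k₀))
      (Set.mem_Ici.2 (hosc_nonneg u₂ k₀)) hk₀ (by norm_num : (0:ℝ) < 1/2)
      (by norm_num : (0:ℝ) < 1/2) (by norm_num)
    simp only [smul_eq_mul] at this
    calc ((osc H u₁ k₀ + osc H u₂ k₀) / 2) ^ p
        = (1/2 * osc H u₁ k₀ + 1/2 * osc H u₂ k₀) ^ p := by ring_nf
      _ < 1/2 * osc H u₁ k₀ ^ p + 1/2 * osc H u₂ k₀ ^ p := this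
      _ = (osc H u₁ k₀ ^ p + osc H u₂ k₀ ^ p) / 2 := by ring
  have hterm : ∀ k, H.w k * (osc H v k) ^ p
      ≤ H.w k * ((osc H u₁ k ^ p + osc H u₂ k ^ p) / 2) := by
    intro k
    apply mul_le_mul_of_nonneg_left _ (H.w_pos k).le
    calc (osc H v k) ^ p ≤ ((osc H u₁ k + osc H u₂ k) / 2) ^ p :=
          Real.rpow_le_rpow (hosc_nonneg v k) (hoscv k) (by linarith)
      _ ≤ _ := hconv k
  have hlt : FH H p v < (FH H p u₁ + FH H p u₂) / 2 := by
    have hsum : FH H p v < ∑ k : Fin m, H.w k * ((osc H u₁ k ^ p + osc H u₂ k ^ p) / 2) := by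
      apply Finset.sum_lt_sum (fun k _ => hterm k)
      refine ⟨k₀, Finset.mem_univ _, ?_⟩
      calc H.w k₀ * (osc H v k₀) ^ p
          ≤ H.w k₀ * ((osc H u₁ k₀ + osc H u₂ k₀) / 2) ^ p := by
            apply mul_le_mul_of_nonneg_left _ (H.w_pos k₀).le
            exact Real.rpow_le_rpow (hosc_nonneg v k₀) (hoscv k₀) (by linarith)
        _ < H.w k₀ * ((osc H u₁ k₀ ^ p + osc H u₂ k₀ ^ p) / 2) :=
            (mul_lt_mul_iff_right₀ (H.w_pos k₀)).2 hstrict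
    calc FH H p v < ∑ k : Fin m, H.w k * ((osc H u₁ k ^ p + osc H u₂ k ^ p) / 2) := hsum
      _ = (FH H p u₁ + FH H p u₂) / 2 := by
          unfold FH; rw [← Finset.sum_add_distrib, Finset.sum_div]
          exact Finset.sum_congr rfl (fun k _ => by ring)
  linarith [hu₁.2 v hadm, hM]
end

section
/- (Comparison principle.) Let H=(V,E,W) be a connected finite hypergraph, p>1, and L⊆V nonempty. If u_1,u_2:V→ℝ satisfy L^p_H u_1(x_j)=0 and L^p_H u_2(x_j)=0 for all x_j∈V∖L, and u_1(x_j)≤u_2(x_j) for all x_j∈L, then u_1(x_j)≤u_2(x_j) for all x_j∈V. -/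
open Finset

variable {V : Type*} [Fintype V] {m : ℕ}

lemma phiP_zero (p : ℝ) : phiP p 0 = 0 := if_pos rfl

lemma phiP_pos_eq {p : ℝ} (s : ℝ) (hs : 0 < s) : phiP p s = s ^ (p - 1) := by
  have he : p - 2 + 1 = p - 1 := by ring
  rw [phiP, if_neg hs.ne', abs_of_pos hs, ← Real.rpow_add_one hs.ne', he]

lemma phiP_neg_eq {p : ℝ} (s : ℝ) (hs : s < 0) : phiP p s = -((-s) ^ (p - 1)) := by
  have h : (-s) ≠ 0 := (neg_pos.mpr hs).ne'
  rw [phiP, if_neg hs.ne, abs_of_neg hs]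
  have h2 : (-s) ^ (p-2) * s = -((-s)^(p-2) * (-s)) := by ring
  have he : p - 2 + 1 = p - 1 := by ring
  rw [h2, ← Real.rpow_add_one h, he]

lemma phiP_strictMono {p : ℝ} (hp : 1 < p) : StrictMono (phiP p) := by
  have hp1 : 0 < p - 1 := by linarith
  intro s t hst
  rcases lt_trichotomy t 0 with ht | ht | ht
  · have hs : s < 0 := hst.trans ht
    rw [phiP_neg_eq s hs, phiP_neg_eq t ht]
    have := Real.rpow_lt_rpow (by linarith : (0:ℝ) ≤ -t) (by linarith : -t < -s) hp1
    linarith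
  · subst ht
    rw [phiP_zero, phiP_neg_eq s hst]
    have := Real.rpow_pos_of_pos (neg_pos.mpr hst) (p-1)
    linarith
  · rcases lt_trichotomy s 0 with hs | hs | hs
    · rw [phiP_neg_eq s hs, phiP_pos_eq t ht]
      have h1 := Real.rpow_pos_of_pos (neg_pos.mpr hs) (p-1)
      have h2 := Real.rpow_pos_of_pos ht (p-1)
      linarith
    · subst hs
      rw [phiP_zero, phiP_pos_eq t ht]
      exact Real.rpow_pos_of_pos ht (p-1)
    · rw [phiP_pos_eq s hs, phiP_pos_eq t ht]
      exact Real.rpow_lt_rpow hs.le hst hp1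

/-- Comparison principle: if `u₁, u₂` both satisfy `L^p_H u = 0` on `V \ L`
and `u₁ ≤ u₂` on `L`, then `u₁ ≤ u₂` on all of `V`. -/
theorem comparison_principle [DecidableEq V] (H : WHypergraph V m) (hconn : H.Connected)
    (p : ℝ) (hp : 1 < p) (L : Finset V) (hL : L.Nonempty) (u₁ u₂ : V → ℝ)
    (h₁ : ∀ x : V, x ∉ L → LpH H p u₁ x = 0) (h₂ : ∀ x : V, x ∉ L → LpH H p u₂ x = 0)
    (hle : ∀ x ∈ L, u₁ x ≤ u₂ x) :
    ∀ x : V, u₁ x ≤ u₂ x := by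
  classical
  intro x0
  by_contra hlt
  push_neg at hlt
  haveI : Nonempty V := ⟨x0⟩
  have huniv : (Finset.univ : Finset V).Nonempty := Finset.univ_nonempty
  set M : ℝ := Finset.univ.sup' huniv (fun z => u₁ z - u₂ z) with hMdef
  have hdle : ∀ y : V, u₁ y - u₂ y ≤ M :=
    fun y => Finset.le_sup' (fun z => u₁ z - u₂ z) (Finset.mem_univ y)
  have hM : 0 < M := lt_of_lt_of_le (sub_pos.mpr hlt) (hdle x0)
  set A : Finset V := Finset.univ.filter (fun z => u₁ z - u₂ z = M) with hAdef
  have hAne : A.Nonempty := by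
    obtain ⟨z, _, hz⟩ := Finset.exists_mem_eq_sup' huniv (fun z => u₁ z - u₂ z)
    exact ⟨z, Finset.mem_filter.mpr ⟨Finset.mem_univ z, hz.symm⟩⟩
  set m₂ : ℝ := A.inf' hAne u₂ with hm2def
  have hnotL : ∀ z : V, u₁ z - u₂ z = M → z ∉ L := by
    intro z hz hzL
    have := hle z hzL
    linarith
  have hspread : ∀ x : V, u₁ x - u₂ x = M → u₂ x = m₂ →
      ∀ k : Fin m, x ∈ H.e k → ∀ y ∈ H.e k, u₁ y - u₂ y = M ∧ u₂ y = m₂ := by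
    intro x hxM hxm k hk
    have hxL : x ∉ L := hnotL x hxM
    have hsum1 := h₁ x hxL
    have hsum2 := h₂ x hxL
    unfold LpH at hsum1 hsum2
    have hS : ∀ j : Fin m,
        (H.e j).sup' (H.e_nonempty j) u₁ ≤ (H.e j).sup' (H.e_nonempty j) u₂ + M := by
      intro j
      apply Finset.sup'_le
      intro y hy
      have h1 := Finset.le_sup' u₂ hy
      have h2 := hdle y
      linarith
    have hIw : ∀ j : Fin m, ∃ z ∈ H.e j, (H.e j).inf' (H.e_nonempty j) u₂ = u₂ z ∧
        (H.e j).inf' (H.e_nonempty j) u₁ ≤ u₂ z + M := by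
      intro j
      obtain ⟨z, hz, hzv⟩ := Finset.exists_mem_eq_inf' (H.e_nonempty j) u₂
      refine ⟨z, hz, hzv, ?_⟩
      have h1 := Finset.inf'_le u₁ hz
      have h2 := hdle z
      linarith
    have hI : ∀ j : Fin m,
        (H.e j).inf' (H.e_nonempty j) u₁ ≤ (H.e j).inf' (H.e_nonempty j) u₂ + M := by
      intro j
      obtain ⟨z, hz, hzv, h3⟩ := hIw j
      rw [hzv]
      exact h3
    have ht : ∀ j : Fin m, x ∈ H.e j →
        (H.e j).sup' (H.e_nonempty j) u₁ + (H.e j).inf' (H.e_nonempty j) u₁ - 2 * u₁ x ≤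
        (H.e j).sup' (H.e_nonempty j) u₂ + (H.e j).inf' (H.e_nonempty j) u₂ - 2 * u₂ x := by
      intro j hj
      have h1 := hS j
      have h2 := hI j
      linarith
    have hle' : ∀ j ∈ Finset.univ.filter (fun k => x ∈ H.e k),
        H.w j * phiP p ((H.e j).sup' (H.e_nonempty j) u₁ +
          (H.e j).inf' (H.e_nonempty j) u₁ - 2 * u₁ x) ≤
        H.w j * phiP p ((H.e j).sup' (H.e_nonempty j) u₂ +
          (H.e j).inf' (H.e_nonempty j) u₂ - 2 * u₂ x) := by
      intro j hj
      have hjx : x ∈ H.e j := (Finset.mem_filter.mp hj).2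
      exact mul_le_mul_of_nonneg_left ((phiP_strictMono hp).monotone (ht j hjx)) (H.w_pos j).le
    have hteq := (Finset.sum_eq_sum_iff_of_le hle').mp (hsum1.trans hsum2.symm)
    have hTeq : ∀ j : Fin m, x ∈ H.e j →
        (H.e j).sup' (H.e_nonempty j) u₁ + (H.e j).inf' (H.e_nonempty j) u₁ - 2 * u₁ x =
        (H.e j).sup' (H.e_nonempty j) u₂ + (H.e j).inf' (H.e_nonempty j) u₂ - 2 * u₂ x := by
      intro j hj
      have h := hteq j (Finset.mem_filter.mpr ⟨Finset.mem_univ j, hj⟩)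
      exact (phiP_strictMono hp).injective (mul_left_cancel₀ (H.w_pos j).ne' h)
    have hIeq : ∀ j : Fin m, x ∈ H.e j →
        (H.e j).inf' (H.e_nonempty j) u₂ = u₂ x ∧
        (H.e j).inf' (H.e_nonempty j) u₁ = u₁ x := by
      intro j hj
      have hT := hTeq j hj
      have hSj := hS j
      have hIj := hI j
      have hI1 : (H.e j).inf' (H.e_nonempty j) u₁ = (H.e j).inf' (H.e_nonempty j) u₂ + M := by
        linarith
      obtain ⟨z, hz, hzv, _⟩ := hIw j
      have hz1 : (H.e j).inf' (H.e_nonempty j) u₁ ≤ u₁ z := Finset.inf'_le u₁ hz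
      have hzM : u₁ z - u₂ z = M := by
        rw [hzv] at hI1
        exact le_antisymm (hdle z) (by linarith)
      have hzA : z ∈ A := Finset.mem_filter.mpr ⟨Finset.mem_univ z, hzM⟩
      have h5 : m₂ ≤ u₂ z := Finset.inf'_le u₂ hzA
      have h6 : (H.e j).inf' (H.e_nonempty j) u₂ ≤ u₂ x := Finset.inf'_le u₂ hj
      have hI2x : (H.e j).inf' (H.e_nonempty j) u₂ = u₂ x := by
        rw [hzv] at h6 ⊢
        linarith
      refine ⟨hI2x, by rw [hI1, hI2x]; linarith⟩
    have hnn : ∀ j ∈ Finset.univ.filter (fun k => x ∈ H.e k),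
        0 ≤ H.w j * phiP p ((H.e j).sup' (H.e_nonempty j) u₁ +
          (H.e j).inf' (H.e_nonempty j) u₁ - 2 * u₁ x) := by
      intro j hj
      have hjx : x ∈ H.e j := (Finset.mem_filter.mp hj).2
      have h1 := (hIeq j hjx).2
      have h2 : u₁ x ≤ (H.e j).sup' (H.e_nonempty j) u₁ := Finset.le_sup' u₁ hjx
      have h3 : (0:ℝ) ≤ (H.e j).sup' (H.e_nonempty j) u₁ +
          (H.e j).inf' (H.e_nonempty j) u₁ - 2 * u₁ x := by linarith
      have h4 := (phiP_strictMono hp).monotone h3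
      rw [phiP_zero] at h4
      exact mul_nonneg (H.w_pos j).le h4
    have hzero := (Finset.sum_eq_zero_iff_of_nonneg hnn).mp hsum1
    have hT1z : ∀ j : Fin m, x ∈ H.e j →
        (H.e j).sup' (H.e_nonempty j) u₁ + (H.e j).inf' (H.e_nonempty j) u₁ - 2 * u₁ x = 0 := by
      intro j hj
      have h := hzero j (Finset.mem_filter.mpr ⟨Finset.mem_univ j, hj⟩)
      have h2 := (mul_eq_zero.mp h).resolve_left (H.w_pos j).ne'
      apply (phiP_strictMono hp).injective
      rw [phiP_zero]
      exact h2
    intro y hy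
    have hIa := hIeq k hk
    have hT1 := hT1z k hk
    have hT2 : (H.e k).sup' (H.e_nonempty k) u₂ + (H.e k).inf' (H.e_nonempty k) u₂
        - 2 * u₂ x = 0 := by rw [← hTeq k hk]; exact hT1
    have hS1 : (H.e k).sup' (H.e_nonempty k) u₁ = u₁ x := by
      have := hIa.2
      linarith
    have hS2 : (H.e k).sup' (H.e_nonempty k) u₂ = u₂ x := by
      have := hIa.1
      linarith
    have hy1 : u₁ y ≤ (H.e k).sup' (H.e_nonempty k) u₁ := Finset.le_sup' u₁ hy
    have hy1' : (H.e k).inf' (H.e_nonempty k) u₁ ≤ u₁ y := Finset.inf'_le u₁ hy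
    have hy2 : u₂ y ≤ (H.e k).sup' (H.e_nonempty k) u₂ := Finset.le_sup' u₂ hy
    have hy2' : (H.e k).inf' (H.e_nonempty k) u₂ ≤ u₂ y := Finset.inf'_le u₂ hy
    constructor
    · have := hIa.1
      have := hIa.2
      linarith
    · have := hIa.1
      linarith
  obtain ⟨x₁, hx₁A, hx₁m⟩ := Finset.exists_mem_eq_inf' hAne u₂
  have hx₁M : u₁ x₁ - u₂ x₁ = M := (Finset.mem_filter.mp hx₁A).2
  have hx₁m' : u₂ x₁ = m₂ := hx₁m.symm
  obtain ⟨y₁, hy₁⟩ := hL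
  obtain ⟨l, ks, hks0, hksl, hchain⟩ := hconn x₁ y₁
  have hstep : ∀ n : ℕ, ∀ hn : n < l + 1, ∀ y ∈ H.e (ks ⟨n, hn⟩),
      u₁ y - u₂ y = M ∧ u₂ y = m₂ := by
    intro n
    induction n with
    | zero =>
      intro hn y hy
      have h0 : (⟨0, hn⟩ : Fin (l + 1)) = 0 := by ext; simp
      rw [h0] at hy
      exact hspread x₁ hx₁M hx₁m' (ks 0) hks0 y hy
    | succ n ih =>
      intro hn y hy
      have hn' : n < l + 1 := by omega
      have hnl : n < l := by omega
      obtain ⟨z, hz⟩ := hchain ⟨n, hnl⟩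
      rw [Finset.mem_inter] at hz
      have hz1 : z ∈ H.e (ks ⟨n, hn'⟩) := hz.1
      have hzA := ih hn' z hz1
      exact hspread z hzA.1 hzA.2 (ks ⟨n + 1, hn⟩) hz.2 y hy
  have hfin := hstep l (Nat.lt_succ_self l) y₁ hksl
  have := hle y₁ hy₁
  linarith [hfin.1]
end

section
/- Let H=(V,E,W) be a finite hypergraph in which every vertex belongs to at least one hyperedge, let L⊆V be nonempty with labels y:L→ℝ, and consider the case p=2. Define the iteration u^{k+1}(x_i)= (1/(2·Σ_{k:x_i∈e_k}w_k))·Σ_{k:x_i∈e_k} w_k·( max_{x_j∈e_k}u^k(x_j) + min_{x_j∈e_k}u^k(x_j) ) for x_i∈V∖L and u^{k+1}(x_i)=y_i for x_i∈L, started from u^0(x_i)=min_{x_j∈L}y_j for x_i∈V∖L and u^0(x_i)=y_i for x_i∈L. Then for every k≥0 and every x_i∈V: min_{x_j∈L}y_j ≤ u^k(x_i) ≤ max_{x_j∈L}y_j and u^{k+1}(x_i) ≥ u^k(x_i); consequently, for each x_i∈V the sequence (u^k(x_i))_{k≥0} converges. -/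
open Finset

variable {V : Type*} [Fintype V] {m : ℕ}

/-- the fixed-point iteration for the simplified hypergraph 2-Laplacian
equation, started from the smallest label, is bounded between the extreme labels,
monotone nondecreasing, and hence pointwise convergent. -/
theorem iteration_monotone_convergent [DecidableEq V] (H : WHypergraph V m)
    (hcov : ∀ x : V, ∃ k : Fin m, x ∈ H.e k)
    (L : Finset V) (hL : L.Nonempty) (y : V → ℝ) (u : ℕ → V → ℝ)
    (h0 : ∀ x : V, u 0 x = if x ∈ L then y x else L.inf' hL y)
    (hstep : ∀ (n : ℕ) (x : V), u (n + 1) x =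
      if x ∈ L then y x
      else (1 / (2 * ∑ k ∈ Finset.univ.filter (fun k => x ∈ H.e k), H.w k)) *
        ∑ k ∈ Finset.univ.filter (fun k => x ∈ H.e k),
          H.w k * ((H.e k).sup' (H.e_nonempty k) (u n) +
                   (H.e k).inf' (H.e_nonempty k) (u n))) :
    (∀ (n : ℕ) (x : V),
      L.inf' hL y ≤ u n x ∧ u n x ≤ L.sup' hL y ∧ u n x ≤ u (n + 1) x) ∧
    ∀ x : V, ∃ l : ℝ, Filter.Tendsto (fun n => u n x) Filter.atTop (nhds l) := by
  have hS : ∀ x : V, 0 < ∑ k ∈ Finset.univ.filter (fun k => x ∈ H.e k), H.w k := by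
    intro x
    obtain ⟨k, hk⟩ := hcov x
    exact Finset.sum_pos (fun k _ => H.w_pos k)
      ⟨k, Finset.mem_filter.2 ⟨Finset.mem_univ k, hk⟩⟩
  have hinfsup : L.inf' hL y ≤ L.sup' hL y := by
    obtain ⟨z, hz⟩ := hL
    exact le_trans (Finset.inf'_le y hz) (Finset.le_sup' y hz)
  -- boundedness
  have hbound : ∀ n x, L.inf' hL y ≤ u n x ∧ u n x ≤ L.sup' hL y := by
    intro n
    induction n with
    | zero =>
      intro x
      rw [h0]
      split
      · next h => exact ⟨Finset.inf'_le y h, Finset.le_sup' y h⟩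
      · exact ⟨le_refl _, hinfsup⟩
    | succ n ih =>
      intro x
      rw [hstep]
      split
      · next h => exact ⟨Finset.inf'_le y h, Finset.le_sup' y h⟩
      · have hSx := hS x
        set F := Finset.univ.filter (fun k => x ∈ H.e k) with hF
        have hinfk : ∀ k ∈ F, L.inf' hL y ≤ (H.e k).inf' (H.e_nonempty k) (u n) :=
          fun k _ => Finset.le_inf' _ _ (fun z _ => (ih z).1)
        have hsupk : ∀ k ∈ F, (H.e k).sup' (H.e_nonempty k) (u n) ≤ L.sup' hL y :=
          fun k _ => Finset.sup'_le _ _ (fun z _ => (ih z).2)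
        have hsupk' : ∀ k ∈ F, L.inf' hL y ≤ (H.e k).sup' (H.e_nonempty k) (u n) := by
          intro k hk
          obtain ⟨z, hz⟩ := H.e_nonempty k
          exact le_trans (ih z).1 (Finset.le_sup' _ hz)
        have hinfk' : ∀ k ∈ F, (H.e k).inf' (H.e_nonempty k) (u n) ≤ L.sup' hL y := by
          intro k hk
          obtain ⟨z, hz⟩ := H.e_nonempty k
          exact le_trans (Finset.inf'_le _ hz) (ih z).2
        constructor
        · rw [one_div, inv_mul_eq_div, le_div_iff₀ (by linarith)]
          calc L.inf' hL y * (2 * ∑ k ∈ F, H.w k)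
              = ∑ k ∈ F, H.w k * (L.inf' hL y + L.inf' hL y) := by
                rw [Finset.mul_sum, Finset.mul_sum]; exact Finset.sum_congr rfl (fun k _ => by ring)
            _ ≤ _ := Finset.sum_le_sum (fun k hk =>
                mul_le_mul_of_nonneg_left (add_le_add (hsupk' k hk) (hinfk k hk))
                  (le_of_lt (H.w_pos k)))
        · rw [one_div, inv_mul_eq_div, div_le_iff₀ (by linarith)]
          calc (∑ k ∈ F, H.w k * ((H.e k).sup' (H.e_nonempty k) (u n) +
                   (H.e k).inf' (H.e_nonempty k) (u n)))
              ≤ ∑ k ∈ F, H.w k * (L.sup' hL y + L.sup' hL y) :=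
                Finset.sum_le_sum (fun k hk =>
                  mul_le_mul_of_nonneg_left (add_le_add (hsupk k hk) (hinfk' k hk))
                    (le_of_lt (H.w_pos k)))
            _ = L.sup' hL y * (2 * ∑ k ∈ F, H.w k) := by
                rw [Finset.mul_sum, Finset.mul_sum]; exact Finset.sum_congr rfl (fun k _ => by ring)
  -- monotonicity
  have hmono : ∀ n x, u n x ≤ u (n + 1) x := by
    intro n
    induction n with
    | zero =>
      intro x
      rw [h0]
      split
      · next h => rw [hstep, if_pos h]
      · exact (hbound 1 x).1
    | succ n ih =>
      intro x
      rw [hstep n x, hstep (n+1) x]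
      split
      · exact le_refl _
      · have hSx := hS x
        apply mul_le_mul_of_nonneg_left _ (by positivity)
        apply Finset.sum_le_sum
        intro k hk
        apply mul_le_mul_of_nonneg_left _ (le_of_lt (H.w_pos k))
        apply add_le_add
        · exact Finset.sup'_le _ _ (fun z hz => le_trans (ih z) (Finset.le_sup' _ hz))
        · exact Finset.le_inf' _ _ (fun z hz => le_trans (Finset.inf'_le _ hz) (ih z))
  refine ⟨fun n x => ⟨(hbound n x).1, (hbound n x).2, hmono n x⟩, fun x => ?_⟩
  have hm : Monotone (fun n => u n x) := monotone_nat_of_le_succ (fun n => hmono n x)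
  have hb : BddAbove (Set.range (fun n => u n x)) := by
    refine ⟨L.sup' hL y, ?_⟩
    rintro _ ⟨n, rfl⟩
    exact (hbound n x).2
  exact ⟨_, tendsto_atTop_ciSup hm hb⟩
end
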